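/- Under the heterogeneous elasticity model with the stated integrability for φ = 1, write ε₀ = E[ε] and ε̃ = ε − ε₀. Then: (i) the value of the arithmetic–geometric wedge at x = 1 is ε_1(1) − ε₀ = E[exp(a)·ε̃] / E[exp(a)]; and (ii) the derivative of ε_1 with respect to log x at x = 1 equals the exp(a)-weighted variance of ε̃, namely d ε_1(x)/d(log x)|_{x=1} = E[exp(a)·ε̃²]/E[exp(a)] − ( E[exp(a)·ε̃]/E[exp(a)] )², which is nonnegative, and is strictly positive whenever ε is not almost surely constant. -/

import Mathlib

open MeasureTheory Real

/-- The arithmetic-mean elasticity as a function of `t = log x`: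
`F(t) = E[ε·exp(a + ε t)] / E[exp(a + ε t)]`, i.e. `ε_1(x) = F(log x)`. -/
noncomputable def arithElas {Ω : Type*} [MeasurableSpace Ω] (μ : Measure Ω)
    (a e : Ω → ℝ) (t : ℝ) : ℝ :=
  (∫ ω, e ω * Real.exp (a ω + e ω * t) ∂μ) / (∫ ω, Real.exp (a ω + e ω * t) ∂μ)

/-- The `exp(a)`-weighted variance of `ε̃ = ε − E[ε]`. -/
noncomputable def wtdVar {Ω : Type*} [MeasurableSpace Ω] (μ : Measure Ω)
    (a e : Ω → ℝ) : ℝ :=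
  (∫ ω, Real.exp (a ω) * (e ω - ∫ ω', e ω' ∂μ) ^ 2 ∂μ) / (∫ ω, Real.exp (a ω) ∂μ)
    - ((∫ ω, Real.exp (a ω) * (e ω - ∫ ω', e ω' ∂μ) ∂μ) / (∫ ω, Real.exp (a ω) ∂μ)) ^ 2

section Aux

variable {Ω : Type*} [MeasurableSpace Ω] {μ : Measure Ω} {a e : Ω → ℝ}

/-- Integrability of `g · exp(a + e t)` for `|g| ≤ 1 + e²`. -/
lemma intAux (ha : Measurable a) (he : Measurable e)
    (hMom : ∀ t : ℝ, Integrable (fun ω => (1 + e ω ^ 2) * Real.exp (a ω + t * e ω)) μ)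
    (g : Ω → ℝ) (hg : Measurable g) (hgb : ∀ ω, |g ω| ≤ 1 + e ω ^ 2) (t : ℝ) :
    Integrable (fun ω => g ω * Real.exp (a ω + e ω * t)) μ := by
  refine (hMom t).mono
    (hg.mul ((ha.add (he.mul_const t)).exp)).aestronglyMeasurable ?_
  filter_upwards with ω
  have h1 : e ω * t = t * e ω := mul_comm _ _
  rw [h1, norm_mul, norm_mul]
  apply mul_le_mul_of_nonneg_right _ (norm_nonneg _)
  rw [Real.norm_eq_abs, Real.norm_eq_abs]
  exact (hgb ω).trans (le_abs_self _)

lemma absle (x : ℝ) : |x| ≤ 1 + x ^ 2 := by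
  rcases abs_cases x with ⟨h, _⟩ | ⟨h, _⟩ <;> nlinarith [sq_nonneg (x - 1), sq_nonneg (x + 1)]

/-- Differentiation under the integral sign at `t = 0`. -/
lemma derivAux (ha : Measurable a) (he : Measurable e)
    (hMom : ∀ t : ℝ, Integrable (fun ω => (1 + e ω ^ 2) * Real.exp (a ω + t * e ω)) μ)
    (g : Ω → ℝ) (hg : Measurable g) (hg1 : ∀ ω, |g ω| ≤ 1 + e ω ^ 2)
    (hg2 : ∀ ω, |g ω * e ω| ≤ 1 + e ω ^ 2) :
    HasDerivAt (fun t => ∫ ω, g ω * Real.exp (a ω + e ω * t) ∂μ)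
      (∫ ω, g ω * e ω * Real.exp (a ω) ∂μ) 0 := by
  set F : ℝ → Ω → ℝ := fun t ω => g ω * Real.exp (a ω + e ω * t) with hF
  set F' : ℝ → Ω → ℝ := fun t ω => g ω * e ω * Real.exp (a ω + e ω * t) with hF'
  set bound : Ω → ℝ := fun ω =>
    (1 + e ω ^ 2) * Real.exp (a ω + 1 * e ω) + (1 + e ω ^ 2) * Real.exp (a ω + (-1) * e ω)
    with hb
  have hmeas : ∀ t : ℝ, AEStronglyMeasurable (F t) μ := fun t =>
    (hg.mul ((ha.add (he.mul_const t)).exp)).aestronglyMeasurable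
  have hmeas' : AEStronglyMeasurable (F' 0) μ :=
    ((hg.mul he).mul ((ha.add (he.mul_const 0)).exp)).aestronglyMeasurable
  have hint : Integrable (F 0) μ := intAux ha he hMom g hg hg1 0
  have hbd : ∀ᵐ ω ∂μ, ∀ t ∈ Metric.ball (0 : ℝ) 1, ‖F' t ω‖ ≤ bound ω := by
    filter_upwards with ω t ht
    have ht1 : |t| ≤ 1 := by
      have := Metric.mem_ball.mp ht
      simp only [Real.dist_eq, sub_zero] at this
      linarith [this.le]
    have hexp : Real.exp (a ω + e ω * t) ≤
        Real.exp (a ω + 1 * e ω) + Real.exp (a ω + (-1) * e ω) := by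
      have h1 : e ω * t ≤ |e ω| := by
        calc e ω * t ≤ |e ω * t| := le_abs_self _
        _ = |e ω| * |t| := abs_mul _ _
        _ ≤ |e ω| * 1 := by gcongr
        _ = |e ω| := mul_one _
      have h2 : Real.exp (a ω + e ω * t) ≤ Real.exp (a ω + |e ω|) := by
        apply Real.exp_le_exp.mpr; linarith
      have h3 : Real.exp (a ω + |e ω|) ≤
          Real.exp (a ω + 1 * e ω) + Real.exp (a ω + (-1) * e ω) := by
        rcases abs_cases (e ω) with ⟨h, _⟩ | ⟨h, _⟩
        · rw [h]
          have : (0:ℝ) < Real.exp (a ω + (-1) * e ω) := Real.exp_pos _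
          simp only [one_mul]; linarith
        · rw [h]
          have : (0:ℝ) < Real.exp (a ω + 1 * e ω) := Real.exp_pos _
          have heq : a ω + -e ω = a ω + (-1) * e ω := by ring
          rw [heq]; linarith
      linarith
    have hnorm : ‖F' t ω‖ = |g ω * e ω| * Real.exp (a ω + e ω * t) := by
      show ‖g ω * e ω * Real.exp (a ω + e ω * t)‖ = _
      rw [norm_mul, Real.norm_eq_abs, Real.norm_eq_abs, abs_of_pos (Real.exp_pos _)]
    rw [hnorm, hb]
    calc |g ω * e ω| * Real.exp (a ω + e ω * t)
        ≤ (1 + e ω ^ 2) * Real.exp (a ω + e ω * t) :=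
          mul_le_mul_of_nonneg_right (hg2 ω) (Real.exp_pos _).le
      _ ≤ (1 + e ω ^ 2) * (Real.exp (a ω + 1 * e ω) + Real.exp (a ω + (-1) * e ω)) := by
          apply mul_le_mul_of_nonneg_left hexp
          nlinarith [sq_nonneg (e ω)]
      _ = _ := by ring
  have hbint : Integrable bound μ := (hMom 1).add (hMom (-1))
  have hdiff : ∀ᵐ ω ∂μ, ∀ t ∈ Metric.ball (0 : ℝ) 1,
      HasDerivAt (fun t => F t ω) (F' t ω) t := by
    filter_upwards with ω t _
    have h1 : HasDerivAt (fun t : ℝ => a ω + e ω * t) (e ω) t := by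
      simpa using ((hasDerivAt_id t).const_mul (e ω)).const_add (a ω)
    have h2 := (h1.exp).const_mul (g ω)
    refine h2.congr_deriv (Eq.symm ?_)
    show g ω * e ω * Real.exp (a ω + e ω * t) = _
    ring
  have key := hasDerivAt_integral_of_dominated_loc_of_deriv_le (F := F) (F' := F')
    (bound := bound) (Metric.ball_mem_nhds 0 one_pos) (Filter.Eventually.of_forall hmeas) hint hmeas' hbd hbint hdiff
  have h0 : ∀ ω, F' 0 ω = g ω * e ω * Real.exp (a ω) := by
    intro ω; show g ω * e ω * Real.exp (a ω + e ω * 0) = _; rw [mul_zero, add_zero]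
  have h0' : (∫ ω, F' 0 ω ∂μ) = ∫ ω, g ω * e ω * Real.exp (a ω) ∂μ := by
    congr 1; funext ω; exact h0 ω
  exact h0' ▸ key.2

end Aux

/-- first-order expansion of the arithmetic–geometric wedge at `x = 1`.
(i) `ε_1(1) − ε₀ = E[exp(a)·ε̃]/E[exp(a)]`; (ii) the derivative of `ε_1` with respect to
`log x` at `x = 1` (i.e. at `t = 0`) equals the `exp(a)`-weighted variance of `ε̃`, which is
nonnegative, and strictly positive whenever `ε` is not a.s. constant. -/
theorem stmt9
    {Ω : Type*} [MeasurableSpace Ω] (μ : Measure Ω) [IsProbabilityMeasure μ]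
    (a e : Ω → ℝ) (ha : Measurable a) (he : Measurable e)
    (hInta : Integrable a μ) (hInte : Integrable e μ)
    (hMom : ∀ t : ℝ, Integrable (fun ω => (1 + e ω ^ 2) * Real.exp (a ω + t * e ω)) μ) :
    (arithElas μ a e (Real.log 1) - (∫ ω, e ω ∂μ)
      = (∫ ω, Real.exp (a ω) * (e ω - ∫ ω', e ω' ∂μ) ∂μ) / (∫ ω, Real.exp (a ω) ∂μ))
    ∧ HasDerivAt (fun t : ℝ => arithElas μ a e t) (wtdVar μ a e) 0
    ∧ 0 ≤ wtdVar μ a e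
    ∧ ((¬ ∃ c : ℝ, ∀ᵐ ω ∂μ, e ω = c) → 0 < wtdVar μ a e) := by
  set m : ℝ := ∫ ω, e ω ∂μ with hm
  -- basic integrabilities
  have hb1 : ∀ ω : Ω, |(1 : ℝ)| ≤ 1 + e ω ^ 2 := by
    intro ω; rw [abs_one]; nlinarith [sq_nonneg (e ω)]
  have hbe : ∀ ω, |e ω| ≤ 1 + e ω ^ 2 := fun ω => absle _
  have hbe2 : ∀ ω, |e ω * e ω| ≤ 1 + e ω ^ 2 := by
    intro ω
    rw [abs_mul, abs_mul_abs_self]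
    nlinarith [sq_nonneg (e ω)]
  have hIexp : Integrable (fun ω => Real.exp (a ω)) μ := by
    simpa using intAux ha he hMom (fun _ => 1) measurable_const hb1 0
  have hIe : Integrable (fun ω => e ω * Real.exp (a ω)) μ := by
    simpa using intAux ha he hMom e he hbe 0
  have hIe2 : Integrable (fun ω => e ω ^ 2 * Real.exp (a ω)) μ := by
    have := intAux ha he hMom (fun ω => e ω ^ 2) (he.pow_const 2)
      (fun ω => by
        show |e ω ^ 2| ≤ 1 + e ω ^ 2
        rw [abs_of_nonneg (sq_nonneg _)]; nlinarith [sq_nonneg (e ω)]) 0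
    simpa using this
  set D : ℝ := ∫ ω, Real.exp (a ω) ∂μ with hD
  set A : ℝ := ∫ ω, e ω * Real.exp (a ω) ∂μ with hA
  set B : ℝ := ∫ ω, e ω ^ 2 * Real.exp (a ω) ∂μ with hB
  have hDpos : 0 < D := integral_exp_pos hIexp
  have hDne : D ≠ 0 := hDpos.ne'
  -- expansion of weighted square integrals
  have hIsq : ∀ c : ℝ, Integrable (fun ω => Real.exp (a ω) * (e ω - c) ^ 2) μ := by
    intro c
    have hfe : (fun ω => Real.exp (a ω) * (e ω - c) ^ 2)
        = fun ω => (e ω ^ 2 * Real.exp (a ω) - (2 * c) * (e ω * Real.exp (a ω)))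
          + c ^ 2 * Real.exp (a ω) := by funext ω; ring
    rw [hfe]
    exact (hIe2.sub (hIe.const_mul (2 * c))).add (hIexp.const_mul (c ^ 2))
  have hsq : ∀ c : ℝ, ∫ ω, Real.exp (a ω) * (e ω - c) ^ 2 ∂μ
      = B - 2 * c * A + c ^ 2 * D := by
    intro c
    have hfe : (fun ω => Real.exp (a ω) * (e ω - c) ^ 2)
        = fun ω => (e ω ^ 2 * Real.exp (a ω) - (2 * c) * (e ω * Real.exp (a ω)))
          + c ^ 2 * Real.exp (a ω) := by funext ω; ring
    have hi1 : Integrable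
        (fun ω => e ω ^ 2 * Real.exp (a ω) - 2 * c * (e ω * Real.exp (a ω))) μ :=
      hIe2.sub (hIe.const_mul (2 * c))
    rw [hfe, integral_add hi1 (hIexp.const_mul (c ^ 2)),
      integral_sub hIe2 (hIe.const_mul (2 * c)), integral_const_mul, integral_const_mul]
  have hlin : ∫ ω, Real.exp (a ω) * (e ω - m) ∂μ = A - m * D := by
    have hfe : (fun ω => Real.exp (a ω) * (e ω - m))
        = fun ω => e ω * Real.exp (a ω) - m * Real.exp (a ω) := by funext ω; ring
    rw [hfe, integral_sub hIe (hIexp.const_mul m), integral_const_mul]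
  -- wtdVar as an integral of a nonnegative function
  set ν : ℝ := m + (A - m * D) / D with hν
  have hVal : wtdVar μ a e = (∫ ω, Real.exp (a ω) * (e ω - ν) ^ 2 ∂μ) / D := by
    rw [wtdVar, hsq ν, hlin, hsq m, hν, ← hD]
    field_simp
    ring
  have hVnonneg : 0 ≤ wtdVar μ a e := by
    rw [hVal]
    apply div_nonneg _ hDpos.le
    exact integral_nonneg fun ω => mul_nonneg (Real.exp_pos _).le (sq_nonneg _)
  refine ⟨?_, ?_, hVnonneg, ?_⟩
  · -- part (i)
    have h0 : arithElas μ a e (Real.log 1) = A / D := by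
      rw [Real.log_one, arithElas]
      simp only [mul_zero, add_zero]
      rfl
    rw [h0, hlin]
    field_simp
  · -- part (ii): derivative
    have hN : HasDerivAt (fun t => ∫ ω, e ω * Real.exp (a ω + e ω * t) ∂μ) B 0 := by
      have h := derivAux ha he hMom e he hbe hbe2
      have hBeq : (∫ ω, e ω * e ω * Real.exp (a ω) ∂μ) = B := by
        rw [hB]; congr 1; funext ω; ring
      exact hBeq ▸ h
    have hDt : HasDerivAt (fun t => ∫ ω, Real.exp (a ω + e ω * t) ∂μ) A 0 := by
      have h := derivAux ha he hMom (fun _ => 1) measurable_const hb1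
        (fun ω => by rw [one_mul]; exact hbe ω)
      simp only [one_mul] at h
      exact h
    have hd0 : (∫ ω, Real.exp (a ω + e ω * 0) ∂μ) = D := by
      rw [hD]; congr 1; funext ω; rw [mul_zero, add_zero]
    have hn0 : (∫ ω, e ω * Real.exp (a ω + e ω * 0) ∂μ) = A := by
      rw [hA]; congr 1; funext ω; rw [mul_zero, add_zero]
    have hx : (∫ ω, Real.exp (a ω + e ω * 0) ∂μ) ≠ 0 := by rw [hd0]; exact hDne
    have hquot := hN.div hDt hx
    have hval2 : wtdVar μ a e
        = (B * (∫ ω, Real.exp (a ω + e ω * 0) ∂μ)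
            - (∫ ω, e ω * Real.exp (a ω + e ω * 0) ∂μ) * A)
          / (∫ ω, Real.exp (a ω + e ω * 0) ∂μ) ^ 2 := by
      rw [hd0, hn0, wtdVar, hlin, hsq m, ← hD]
      field_simp
      ring
    rw [hval2]
    exact hquot
  · -- strict positivity
    intro hne
    rcases lt_or_eq_of_le hVnonneg with h | h
    · exact h
    exfalso
    apply hne
    have hzero : ∫ ω, Real.exp (a ω) * (e ω - ν) ^ 2 ∂μ = 0 := by
      have h2 := hVal
      rw [← h] at h2
      have := h2.symm
      rwa [div_eq_zero_iff, or_iff_left hDne] at this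
    have hae : (fun ω => Real.exp (a ω) * (e ω - ν) ^ 2) =ᵐ[μ] 0 := by
      rw [← integral_eq_zero_iff_of_nonneg
        (fun ω => mul_nonneg (Real.exp_pos _).le (sq_nonneg _)) (hIsq ν)]
      exact hzero
    refine ⟨ν, ?_⟩
    filter_upwards [hae] with ω hω
    have h1 : Real.exp (a ω) * (e ω - ν) ^ 2 = 0 := hω
    have h2 : (e ω - ν) ^ 2 = 0 := by
      rcases mul_eq_zero.mp h1 with h' | h'
      · exact absurd h' (Real.exp_pos _).ne'
      · exact h'
    have h3 := pow_eq_zero_iff (n := 2) (by norm_num) |>.mp h2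
    linarith
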